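/- Let n, Δ, δ be integers with 3 ≤ δ < Δ < n such that δ+1 divides n−Δ, and let k = (n−Δ)/(δ+1). The sequential sum graph G = K_δ + K_1 + [K_1 + K_{δ−1} + K_1]^{k−1} + K_1 + K_{Δ−1} has order n, minimum degree δ and maximum degree Δ. -/

import Mathlib

open Finset

/-- The sequential sum of a list of complete graphs with the given orders:
vertices within a block are all adjacent, and all vertices of consecutive
blocks are joined. -/
def seqSum (Ls : List ℕ) : SimpleGraph (Σ i : Fin Ls.length, Fin (Ls.get i)) where
  Adj x y := (x.1 = y.1 ∧ x ≠ y) ∨ x.1.val + 1 = y.1.val ∨ y.1.val + 1 = x.1.val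
  symm := by
    constructor
    rintro x y (⟨h, hne⟩ | h | h)
    · exact Or.inl ⟨h.symm, fun e => hne e.symm⟩
    · exact Or.inr (Or.inr h)
    · exact Or.inr (Or.inl h)
  loopless := by
    constructor
    rintro x (⟨_, hne⟩ | h | h)
    · exact hne rfl
    · omega
    · omega

instance (Ls : List ℕ) : DecidableRel (seqSum Ls).Adj := fun x y =>
  decidable_of_iff
    ((x.1 = y.1 ∧ x ≠ y) ∨ x.1.val + 1 = y.1.val ∨ y.1.val + 1 = x.1.val) Iff.rfl

/-- The list of block orders of the graph
`K_δ + K_1 + [K_1 + K_{δ-1} + K_1]^{k-1} + K_1 + K_{Δ-1}`. -/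
def blockSizes (Δ δ k : ℕ) : List ℕ :=
  [δ, 1] ++ (List.replicate (k - 1) [1, δ - 1, 1]).flatten ++ [1, Δ - 1]


lemma rep3_len (a b c : ℕ) (m : ℕ) :
    (List.replicate m [a, b, c]).flatten.length = 3 * m := by
  simp [List.length_flatten, mul_comm]


lemma rep3_getElem (a b c : ℕ) (m p : ℕ) (hp : p < (List.replicate m [a, b, c]).flatten.length) :
    (List.replicate m [a, b, c]).flatten[p] =
      if p % 3 = 0 then a else if p % 3 = 1 then b else c := by
  induction m generalizing p with
  | zero => simp at hp
  | succ m ih =>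
    rw [rep3_len] at hp
    simp only [List.replicate_succ, List.flatten_cons]
    rcases lt_or_ge p 3 with h | h
    · rw [List.getElem_append_left (show p < ([a,b,c] : List ℕ).length by simpa using h)]
      interval_cases p <;> simp
    · rw [List.getElem_append_right (show ([a,b,c] : List ℕ).length ≤ p by simpa using h)]
      have h3 : (p - [a,b,c].length) % 3 = p % 3 := by simp; omega
      rw [ih _ (by rw [rep3_len]; simp; omega), h3]

lemma bs_len (Δ δ k : ℕ) : (blockSizes Δ δ k).length = 3 * (k - 1) + 4 := by
  simp [blockSizes, rep3_len]; omega


lemma bs_get (Δ δ k : ℕ) (hk : 1 ≤ k) (m : ℕ) (h : m < (blockSizes Δ δ k).length) :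
    (blockSizes Δ δ k).get ⟨m, h⟩ =
      if m = 0 then δ else if m = 3 * (k - 1) + 3 then Δ - 1
      else if m % 3 = 0 then δ - 1 else 1 := by
  have hlen := bs_len Δ δ k
  rw [hlen] at h
  rw [List.get_eq_getElem]
  have hA : (([δ, 1] : List ℕ) ++ (List.replicate (k-1) [1, δ-1, 1]).flatten).length
      = 3 * (k - 1) + 2 := by simp [rep3_len]; omega
  simp only [blockSizes]
  rcases lt_or_ge m (3 * (k - 1) + 2) with h3 | h3
  · rw [List.getElem_append_left (by omega)]
    rcases lt_or_ge m 2 with h2 | h2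
    · rw [List.getElem_append_left (by simp; omega)]
      interval_cases m <;> simp <;> omega
    · rw [List.getElem_append_right (by simp; omega)]
      rw [rep3_getElem _ _ _ _ _ (by rw [rep3_len]; simp; omega)]
      simp only [List.length_cons, List.length_nil]
      have e0 : ¬ m = 0 := by omega
      have e1 : ¬ m = 3 * (k - 1) + 3 := by omega
      rw [if_neg e0, if_neg e1]
      split_ifs <;> omega
  · rw [List.getElem_append_right (by omega)]
    simp only [hA]
    rcases (by omega : m = 3*(k-1)+2 ∨ m = 3*(k-1)+3) with h4 | h4 <;> subst h4
    · simp only [Nat.sub_self, List.getElem_cons_zero]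
      rw [if_neg (by omega), if_neg (by omega), if_neg (by omega)]
    · have e1 : 3*(k-1)+3 - (3 * (k - 1) + 2) = 1 := by omega
      simp only [e1, List.getElem_cons_succ, List.getElem_cons_zero]
      rw [if_neg (by omega)]; simp


lemma sum_fin_ite {len : ℕ} (m : ℕ) (f : Fin len → ℕ) :
    (∑ j : Fin len, if m = j.val then f j else 0) =
      if h : m < len then f ⟨m, h⟩ else 0 := by
  split_ifs with h
  · rw [Finset.sum_eq_single ⟨m, h⟩]
    · simp
    · intro j _ hj
      rw [if_neg]
      intro e; exact hj (by exact Fin.ext e.symm)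
    · simp
  · apply Finset.sum_eq_zero
    intro j _
    rw [if_neg]
    intro e; exact h (e ▸ j.isLt)


lemma seqSum_degree (Ls : List ℕ) (i : Fin Ls.length) (v : Fin (Ls.get i)) :
    (seqSum Ls).degree ⟨i, v⟩ =
      (Ls.get i - 1) +
      (if h : i.val + 1 < Ls.length then Ls.get ⟨i.val + 1, h⟩ else 0) +
      (if h : 1 ≤ i.val then Ls.get ⟨i.val - 1, by omega⟩ else 0) := by
  classical
  rw [SimpleGraph.degree]
  have huniv : (seqSum Ls).neighborFinset ⟨i, v⟩ =
      (Finset.univ.sigma fun _ => Finset.univ).filter ((seqSum Ls).Adj ⟨i, v⟩) := by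
    rw [SimpleGraph.neighborFinset_eq_filter, Finset.univ_sigma_univ]
  have hfil : (Finset.univ.sigma fun (j : Fin Ls.length) => (Finset.univ : Finset (Fin (Ls.get j)))).filter
      ((seqSum Ls).Adj ⟨i, v⟩) =
      Finset.univ.sigma fun j => Finset.univ.filter fun w => (seqSum Ls).Adj ⟨i, v⟩ ⟨j, w⟩ := by
    ext ⟨j, w⟩
    simp [Finset.mem_sigma, Finset.mem_filter]
  rw [huniv, hfil, Finset.card_sigma]
  have hcard : ∀ j : Fin Ls.length,
      (Finset.univ.filter fun w => (seqSum Ls).Adj ⟨i, v⟩ ⟨j, w⟩).card =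
      (if (j : ℕ) = i.val then Ls.get i - 1 else 0) +
      (if i.val + 1 = j.val then Ls.get j else 0) +
      (if j.val + 1 = i.val then Ls.get j else 0) := by
    intro j
    by_cases hji : (j : ℕ) = i.val
    · have hji' : j = i := Fin.ext hji
      subst hji'
      rw [if_pos rfl]
      have : (Finset.univ.filter fun w => (seqSum Ls).Adj ⟨j, v⟩ ⟨j, w⟩) =
          Finset.univ.erase v := by
        ext w
        simp only [Finset.mem_filter, Finset.mem_univ, true_and, and_true, Finset.mem_erase]
        constructor
        · rintro (⟨-, hne⟩ | h | h)
          · exact fun (e : w = v) => hne (by cases e; rfl)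
          · simp at h
          · simp at h
        · intro hne
          exact Or.inl ⟨rfl, fun (e : (⟨j,v⟩ : Σ i, Fin (Ls.get i)) = ⟨j,w⟩) => hne (by cases e; rfl)⟩
      rw [this, Finset.card_erase_of_mem (Finset.mem_univ _)]
      simp
    · rw [if_neg hji]
      by_cases hr : i.val + 1 = j.val
      · rw [if_pos hr, if_neg (by omega)]
        have : (Finset.univ.filter fun w => (seqSum Ls).Adj ⟨i, v⟩ ⟨j, w⟩) = Finset.univ := by
          ext w
          simp only [Finset.mem_filter, Finset.mem_univ, true_and, iff_true]
          exact Or.inr (Or.inl hr)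
        rw [this]
        simp
      · rw [if_neg hr]
        by_cases hl : j.val + 1 = i.val
        · rw [if_pos hl]
          have : (Finset.univ.filter fun w => (seqSum Ls).Adj ⟨i, v⟩ ⟨j, w⟩) = Finset.univ := by
            ext w
            simp only [Finset.mem_filter, Finset.mem_univ, true_and, iff_true]
            exact Or.inr (Or.inr hl)
          rw [this]
          simp
        · rw [if_neg hl]
          have : (Finset.univ.filter fun w => (seqSum Ls).Adj ⟨i, v⟩ ⟨j, w⟩) = ∅ := by
            ext w
            simp only [Finset.mem_filter, Finset.mem_univ, true_and, Finset.notMem_empty,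
              iff_false]
            rintro (⟨e, _⟩ | h | h)
            · exact hji (congrArg Fin.val e).symm
            · exact hr h
            · exact hl h
          rw [this]
          simp
  rw [Finset.sum_congr rfl fun j _ => hcard j]
  rw [Finset.sum_add_distrib, Finset.sum_add_distrib]
  congr 1
  congr 1
  · have : (∑ j : Fin Ls.length, if (j : ℕ) = i.val then Ls.get i - 1 else 0) =
        ∑ j : Fin Ls.length, if (i.val : ℕ) = j.val then Ls.get i - 1 else 0 := by
      apply Finset.sum_congr rfl
      intro j _
      exact if_congr eq_comm rfl rfl
    rw [this, sum_fin_ite i.val (fun _ => Ls.get i - 1), dif_pos i.isLt]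
  · rw [sum_fin_ite (i.val + 1) (fun j => Ls.get j)]
  · have : (∑ j : Fin Ls.length, if j.val + 1 = i.val then Ls.get j else 0) =
        ∑ j : Fin Ls.length, if i.val - 1 = j.val ∧ 1 ≤ i.val then Ls.get j else 0 := by
      apply Finset.sum_congr rfl
      intro j _
      exact if_congr (by omega) rfl rfl
    rw [this]
    by_cases h1 : 1 ≤ i.val
    · have h2 : (∑ j : Fin Ls.length, if i.val - 1 = j.val ∧ 1 ≤ i.val then Ls.get j else 0) =
          ∑ j : Fin Ls.length, if i.val - 1 = j.val then Ls.get j else 0 :=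
        Finset.sum_congr rfl fun j _ => if_congr (by tauto) rfl rfl
      rw [h2, sum_fin_ite (i.val - 1) (fun j => Ls.get j),
        dif_pos (show i.val - 1 < Ls.length by have := i.isLt; omega), dif_pos h1]
    · rw [dif_neg h1]
      apply Finset.sum_eq_zero
      intro j _
      rw [if_neg (by tauto)]


set_option maxHeartbeats 2000000 in
theorem seqSum_order_min_max_degree (n Δ δ : ℕ) (hδ3 : 3 ≤ δ) (hδΔ : δ < Δ)
    (hΔn : Δ < n) (hdvd : (δ + 1) ∣ (n - Δ)) (k : ℕ) (hk : k = (n - Δ) / (δ + 1)) :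
    Fintype.card (Σ i : Fin (blockSizes Δ δ k).length, Fin ((blockSizes Δ δ k).get i)) = n ∧
    (seqSum (blockSizes Δ δ k)).minDegree = δ ∧
    (seqSum (blockSizes Δ δ k)).maxDegree = Δ := by
  have hkm : (δ + 1) * k = n - Δ := by rw [hk]; exact Nat.mul_div_cancel' hdvd
  have hk1 : 1 ≤ k := by
    rcases Nat.eq_zero_or_pos k with h | h
    · rw [h, mul_zero] at hkm; omega
    · exact h
  have hlen := bs_len Δ δ k
  -- the order
  have hcard : Fintype.card
      (Σ i : Fin (blockSizes Δ δ k).length, Fin ((blockSizes Δ δ k).get i)) = n := by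
    rw [Fintype.card_sigma]
    simp only [Fintype.card_fin, List.get_eq_getElem]
    rw [Fin.sum_univ_getElem]
    obtain ⟨m, rfl⟩ : ∃ m, k = m + 1 := ⟨k - 1, by omega⟩
    have h1 : m + 1 - 1 = m := by omega
    have h2 : δ - 1 + 1 = δ := by omega
    simp only [blockSizes, h1, List.sum_append, List.sum_flatten, List.map_replicate,
      List.sum_replicate, List.sum_cons, List.sum_nil, smul_eq_mul, h2]
    have h3 : m * (1 + (δ - 1 + (1 + 0))) = (δ + 1) * m := by
      rw [show 1 + (δ - 1 + (1 + 0)) = δ + 1 by omega]; ring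
    have h4 : (δ + 1) * (m + 1) = (δ + 1) * m + δ + 1 := by ring
    omega
  have hbound : ∀ x : Σ i : Fin (blockSizes Δ δ k).length, Fin ((blockSizes Δ δ k).get i),
      δ ≤ (seqSum (blockSizes Δ δ k)).degree x ∧
        (seqSum (blockSizes Δ δ k)).degree x ≤ Δ := by
    rintro ⟨⟨iv, hiv⟩, v⟩
    have hiv' : iv < 3 * (k - 1) + 4 := hlen ▸ hiv
    rw [seqSum_degree]
    simp only [bs_get Δ δ k hk1, hlen]
    split_ifs <;> first | omega | (exfalso; assumption)
  have hl0 : 0 < (blockSizes Δ δ k).length := by omega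
  have hx0 : (0 : ℕ) < (blockSizes Δ δ k).get ⟨0, hl0⟩ := by
    rw [bs_get Δ δ k hk1]; simp; omega
  have hdeg0 : (seqSum (blockSizes Δ δ k)).degree ⟨⟨0, hl0⟩, ⟨0, hx0⟩⟩ = δ := by
    rw [seqSum_degree]
    simp only [bs_get Δ δ k hk1, hlen]
    split_ifs <;> first | omega | (exfalso; assumption)
  have hl1 : 3 * (k - 1) + 2 < (blockSizes Δ δ k).length := by omega
  have hx1 : (0 : ℕ) < (blockSizes Δ δ k).get ⟨3 * (k - 1) + 2, hl1⟩ := by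
    rw [bs_get Δ δ k hk1]
    rw [if_neg (by omega), if_neg (by omega), if_neg (by omega)]
    omega
  have hdeg1 : (seqSum (blockSizes Δ δ k)).degree ⟨⟨3 * (k - 1) + 2, hl1⟩, ⟨0, hx1⟩⟩ = Δ := by
    rw [seqSum_degree]
    simp only [bs_get Δ δ k hk1, hlen]
    split_ifs <;> first | omega | (exfalso; assumption)
  haveI : Nonempty (Σ i : Fin (blockSizes Δ δ k).length, Fin ((blockSizes Δ δ k).get i)) :=
    ⟨⟨⟨0, hl0⟩, ⟨0, hx0⟩⟩⟩
  have hmin1 : (seqSum (blockSizes Δ δ k)).minDegree ≤ δ := by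
    have h := SimpleGraph.minDegree_le_degree (seqSum (blockSizes Δ δ k))
      ⟨⟨0, hl0⟩, ⟨0, hx0⟩⟩
    rw [hdeg0] at h
    exact h
  have hmax1 : Δ ≤ (seqSum (blockSizes Δ δ k)).maxDegree := by
    have h := SimpleGraph.degree_le_maxDegree (seqSum (blockSizes Δ δ k))
      ⟨⟨3 * (k - 1) + 2, hl1⟩, ⟨0, hx1⟩⟩
    rw [hdeg1] at h
    exact h
  exact ⟨hcard,
    le_antisymm hmin1
      ((seqSum (blockSizes Δ δ k)).le_minDegree_of_forall_le_degree δ fun v => (hbound v).1),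
    le_antisymm
      ((seqSum (blockSizes Δ δ k)).maxDegree_le_of_forall_degree_le Δ fun v => (hbound v).2)
      hmax1⟩
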